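/- arXiv:1004.5479 — 3 statements merged into one kernel-verified Lean document; each statement's English description precedes it below -/
import Mathlib

section
/- Let p0, p1, ..., pK be strictly positive probability densities on ℝ^N, and consider minimizing F(r) = D(p0 ‖ Σ_{k=1}^K r_k p_k) over the probability simplex {r ∈ [0,1]^K : Σ r_k = 1}. Then the vertex r = e_1 (all mass on p_1) is a global minimizer if and only if for every k ≠ 1, ∫ p0 · (p_k / p_1) dx ≤ 1 (equivalently E_{p0}[p_k/p_1] ≤ 1). -/
open MeasureTheory Real Filter Topology

/-- The vertex `r = e₁` (all mass on the first density) globally minimizes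
`r ↦ D(p0 ‖ Σ_k r_k p_k)` over the probability simplex iff
`E_{p0}[p_k/p_1] ≤ 1` for every `k ≠ 1`. -/
theorem stmt_6 {N K : ℕ} [NeZero K]
    (p0 : (Fin N → ℝ) → ℝ) (p : Fin K → (Fin N → ℝ) → ℝ)
    (hp0meas : Measurable p0) (hpmeas : ∀ k, Measurable (p k))
    (hp0pos : ∀ x, 0 < p0 x) (hppos : ∀ k x, 0 < p k x)
    (hp0int : ∫ x, p0 x = 1) (hpint : ∀ k, ∫ x, p k x = 1)
    (hIntKL : ∀ r : Fin K → ℝ, (∀ k, 0 ≤ r k) → (∑ k, r k = 1) →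
      Integrable (fun x => p0 x * Real.log (p0 x / ∑ k, r k * p k x)))
    (hIntRatio : ∀ k, Integrable (fun x => p0 x * (p k x / p 0 x))) :
    ((∀ r : Fin K → ℝ, (∀ k, 0 ≤ r k) → (∑ k, r k = 1) →
        (∫ x, p0 x * Real.log (p0 x / p 0 x)) ≤
          ∫ x, p0 x * Real.log (p0 x / ∑ k, r k * p k x)) ↔
      (∀ k : Fin K, k ≠ 0 → (∫ x, p0 x * (p k x / p 0 x)) ≤ 1)) := by
  have hp0Int : Integrable p0 := by
    by_contra h
    rw [integral_undef h] at hp0int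
    norm_num at hp0int
  -- the vertex vector e₀
  have he0nn : ∀ j : Fin K, 0 ≤ (fun j : Fin K => if j = 0 then (1:ℝ) else 0) j := by
    intro j; dsimp only; split_ifs <;> norm_num
  have he0sum : ∑ j : Fin K, (if j = 0 then (1:ℝ) else 0) = 1 := by
    simp
  have he0q : ∀ x, ∑ j : Fin K, (if j = 0 then (1:ℝ) else 0) * p j x = p 0 x := by
    intro x
    rw [Finset.sum_congr rfl (fun j _ => by
      rw [ite_mul, one_mul, zero_mul] :
        ∀ j ∈ Finset.univ, (if j = 0 then (1:ℝ) else 0) * p j x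
          = if j = 0 then p j x else 0)]
    simp
  -- positivity of mixtures
  have hqpos : ∀ (r : Fin K → ℝ), (∀ k, 0 ≤ r k) → (∑ k, r k = 1) →
      ∀ x, 0 < ∑ j, r j * p j x := by
    intro r hnn hs x
    obtain ⟨j, hj⟩ : ∃ j, 0 < r j := by
      by_contra h
      push_neg at h
      have : ∀ j, r j = 0 := fun j => le_antisymm (h j) (hnn j)
      simp [this] at hs
    exact Finset.sum_pos' (fun i _ => mul_nonneg (hnn i) (hppos i x).le)
      ⟨j, Finset.mem_univ j, mul_pos hj (hppos j x)⟩
  -- key reformulation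
  have hkey : ∀ (r : Fin K → ℝ) (hnn : ∀ k, 0 ≤ r k) (hs : ∑ k, r k = 1),
      Integrable (fun x => p0 x * Real.log ((∑ j, r j * p j x) / p 0 x)) ∧
      ∫ x, p0 x * Real.log ((∑ j, r j * p j x) / p 0 x) =
        (∫ x, p0 x * Real.log (p0 x / p 0 x)) -
          ∫ x, p0 x * Real.log (p0 x / ∑ j, r j * p j x) := by
    intro r hnn hs
    have hI0 := hIntKL _ he0nn he0sum
    simp only [he0q] at hI0
    have hIr := hIntKL r hnn hs
    have hid : ∀ x, p0 x * Real.log ((∑ j, r j * p j x) / p 0 x) =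
        p0 x * Real.log (p0 x / p 0 x) - p0 x * Real.log (p0 x / ∑ j, r j * p j x) := by
      intro x
      rw [Real.log_div (hqpos r hnn hs x).ne' (hppos 0 x).ne',
        Real.log_div (hp0pos x).ne' (hppos 0 x).ne',
        Real.log_div (hp0pos x).ne' (hqpos r hnn hs x).ne']
      ring
    constructor
    · exact (hI0.sub hIr).congr (Filter.Eventually.of_forall fun x => (hid x).symm)
    · rw [show (fun x => p0 x * Real.log ((∑ j, r j * p j x) / p 0 x)) =
        (fun x => p0 x * Real.log (p0 x / p 0 x) -
          p0 x * Real.log (p0 x / ∑ j, r j * p j x)) from funext hid]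
      exact integral_sub hI0 hIr
  constructor
  · -- minimality ⟹ first-order condition
    intro hmin k hk
    set u : (Fin N → ℝ) → ℝ := fun x => p k x / p 0 x - 1 with hu_def
    have hu_gt : ∀ x, -1 < u x := by
      intro x
      have := div_pos (hppos k x) (hppos 0 x)
      simp only [hu_def]
      linarith
    have hu_int : Integrable (fun x => p0 x * u x) := by
      have : (fun x => p0 x * u x) = fun x => p0 x * (p k x / p 0 x) - p0 x := by
        funext x; simp only [hu_def]; ring
      rw [this]
      exact (hIntRatio k).sub hp0Int
    have h1tu : ∀ (t : ℝ), 0 < t → t ≤ 1 → ∀ x, 0 < 1 + t * u x := by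
      intro t ht0 ht1 x
      nlinarith [hu_gt x, mul_pos ht0 (by linarith [hu_gt x] : 0 < u x + 1)]
    -- the family of mixtures (1-t)·p₁ + t·p_k
    have hfam : ∀ (t : ℝ), 0 < t → t ≤ 1 →
        Integrable (fun x => p0 x * Real.log (1 + t * u x)) ∧
        ∫ x, p0 x * Real.log (1 + t * u x) ≤ 0 := by
      intro t ht0 ht1
      set r : Fin K → ℝ := fun j => if j = 0 then 1 - t else if j = k then t else 0 with hr_def
      have hr : ∀ j, r j = (1 - t) * (if j = 0 then 1 else 0) + t * (if j = k then 1 else 0) := by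
        intro j
        by_cases h0 : j = 0
        · subst h0; simp [hr_def, (Ne.symm hk)]
        · by_cases hkj : j = k
          · subst hkj; simp [hr_def, h0]
          · simp [hr_def, h0, hkj]
      have hnn : ∀ j, 0 ≤ r j := by
        intro j; rw [hr]; split_ifs <;> norm_num <;> linarith
      have hsum : ∑ j, r j = 1 := by
        simp only [hr]
        rw [Finset.sum_add_distrib, ← Finset.mul_sum, ← Finset.mul_sum]
        simp
      have hq : ∀ x, ∑ j, r j * p j x = (1 - t) * p 0 x + t * p k x := by
        intro x
        have h1 : ∀ j, r j * p j x =
            (1 - t) * ((if j = 0 then 1 else 0) * p j x) +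
              t * ((if j = k then 1 else 0) * p j x) := by
          intro j; rw [hr]; ring
        rw [Finset.sum_congr rfl fun j _ => h1 j, Finset.sum_add_distrib,
          ← Finset.mul_sum, ← Finset.mul_sum]
        congr 1
        · congr 1
          rw [Finset.sum_congr rfl (fun j _ => by rw [ite_mul, one_mul, zero_mul] :
            ∀ j ∈ Finset.univ, (if j = 0 then (1:ℝ) else 0) * p j x
              = if j = 0 then p j x else 0)]
          simp
        · congr 1
          rw [Finset.sum_congr rfl (fun j _ => by rw [ite_mul, one_mul, zero_mul] :
            ∀ j ∈ Finset.univ, (if j = k then (1:ℝ) else 0) * p j x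
              = if j = k then p j x else 0)]
          simp
      have hqratio : ∀ x, (∑ j, r j * p j x) / p 0 x = 1 + t * u x := by
        intro x
        rw [hq]
        field_simp [hu_def, (hppos 0 x).ne']
        have h0 : p 0 x * (p k x / p 0 x) = p k x := by rw [mul_div_assoc', mul_div_cancel_left₀ _ (hppos 0 x).ne']
        simp only [hu_def]
        linear_combination (-t) * h0
      obtain ⟨hI, hEq⟩ := hkey r hnn hsum
      simp only [hqratio] at hI hEq
      refine ⟨hI, ?_⟩
      have := hmin r hnn hsum
      linarith
    -- monotonicity of t ↦ t⁻¹ log(1 + t u)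
    have hmono : ∀ x, ∀ s t : ℝ, 0 < s → s ≤ t → t ≤ 1 →
        t⁻¹ * Real.log (1 + t * u x) ≤ s⁻¹ * Real.log (1 + s * u x) := by
      intro x s t hs hst ht1
      have ht : 0 < t := lt_of_lt_of_le hs hst
      have h1t : 0 < 1 + t * u x := h1tu t ht ht1 x
      have h1s : 0 < 1 + s * u x := h1tu s hs (hst.trans ht1) x
      have ha : (0:ℝ) ≤ s / t := by positivity
      have hb : (0:ℝ) ≤ 1 - s / t := by
        have : s / t ≤ 1 := (div_le_one ht).mpr hst
        linarith
      have hcon := strictConcaveOn_log_Ioi.concaveOn.2 (Set.mem_Ioi.mpr h1t)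
        (Set.mem_Ioi.mpr one_pos) ha hb (by ring)
      rw [smul_eq_mul, smul_eq_mul, smul_eq_mul, smul_eq_mul] at hcon
      have hpt : s / t * (1 + t * u x) + (1 - s / t) * 1 = 1 + s * u x := by
        field_simp
        ring
      rw [hpt, Real.log_one, mul_zero, add_zero] at hcon
      rw [← mul_le_mul_iff_right₀ hs]
      calc s * (t⁻¹ * Real.log (1 + t * u x))
          = s / t * Real.log (1 + t * u x) := by rw [div_eq_mul_inv]; ring
        _ ≤ Real.log (1 + s * u x) := hcon
        _ = s * (s⁻¹ * Real.log (1 + s * u x)) := by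
            rw [mul_inv_cancel_left₀ hs.ne']
    have hub : ∀ (t:ℝ), 0 < t → t ≤ 1 → ∀ x, Real.log (1 + t * u x) ≤ t * u x := by
      intro t ht0 ht1 x
      have := Real.log_le_sub_one_of_pos (h1tu t ht0 ht1 x)
      linarith
    -- the sequence t = 1/(n+2) and dominated convergence
    set c : ℕ → ℝ := fun n => (n:ℝ) + 2 with hc_def
    have hc_pos : ∀ n, 0 < c n := by
      intro n; simp only [hc_def]; positivity
    have hct1 : ∀ n, 0 < (c n)⁻¹ := fun n => inv_pos.mpr (hc_pos n)
    have hct2 : ∀ n, (c n)⁻¹ ≤ 1 := by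
      intro n
      apply inv_le_one_of_one_le₀
      have : (0:ℝ) ≤ (n:ℝ) := Nat.cast_nonneg n
      simp only [hc_def]; linarith
    have hgI : ∀ n, Integrable (fun x => p0 x * Real.log (1 + (c n)⁻¹ * u x)) :=
      fun n => (hfam _ (hct1 n) (hct2 n)).1
    set g : ℕ → (Fin N → ℝ) → ℝ := fun n x =>
      p0 x * u x - c n * (p0 x * Real.log (1 + (c n)⁻¹ * u x)) with hg_def
    have hgint : ∀ n, Integrable (g n) := fun n => hu_int.sub ((hgI n).const_mul (c n))
    have hgval : ∀ n, ∫ x, g n x =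
        (∫ x, p0 x * u x) - c n * ∫ x, p0 x * Real.log (1 + (c n)⁻¹ * u x) := by
      intro n
      simp only [hg_def]
      rw [integral_sub hu_int ((hgI n).const_mul _), integral_const_mul]
    have hlow : ∀ n, (∫ x, p0 x * u x) ≤ ∫ x, g n x := by
      intro n
      have h2 := (hfam _ (hct1 n) (hct2 n)).2
      have h3 : c n * ∫ x, p0 x * Real.log (1 + (c n)⁻¹ * u x) ≤ 0 :=
        mul_nonpos_of_nonneg_of_nonpos (hc_pos n).le h2
      rw [hgval n]; linarith
    have hg0 : ∀ n x, 0 ≤ g n x := by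
      intro n x
      have h1 := hub _ (hct1 n) (hct2 n) x
      have h3 : c n * Real.log (1 + (c n)⁻¹ * u x) ≤ u x := by
        have h4 := mul_le_mul_of_nonneg_left h1 (hc_pos n).le
        rwa [← mul_assoc, mul_inv_cancel₀ (hc_pos n).ne', one_mul] at h4
      have h5 : g n x = p0 x * (u x - c n * Real.log (1 + (c n)⁻¹ * u x)) := by
        simp only [hg_def]; ring
      rw [h5]
      exact mul_nonneg (hp0pos x).le (by linarith)
    have hgle : ∀ n x, g n x ≤ g 0 x := by
      intro n x
      have hc0n : c 0 ≤ c n := by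
        have : (0:ℝ) ≤ (n:ℝ) := Nat.cast_nonneg n
        simp only [hc_def]; push_cast; linarith
      have hinv : (c n)⁻¹ ≤ (c 0)⁻¹ := by
        apply inv_anti₀ (hc_pos 0) hc0n
      have hm := hmono x (c n)⁻¹ (c 0)⁻¹ (hct1 n) hinv (hct2 0)
      rw [inv_inv, inv_inv] at hm
      have hm2 := mul_le_mul_of_nonneg_left hm (hp0pos x).le
      simp only [hg_def]
      nlinarith [hm2]
    have hgtend : ∀ x, Tendsto (fun n => g n x) atTop (𝓝 0) := by
      intro x
      have hnat : Tendsto (fun n : ℕ => c n) atTop atTop :=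
        tendsto_atTop_add_const_right _ 2 tendsto_natCast_atTop_atTop
      have h1 : Tendsto (fun n => c n * Real.log (1 + u x / c n)) atTop (𝓝 (u x)) :=
        (Real.tendsto_mul_log_one_add_div_atTop (u x)).comp hnat
      have h1' : Tendsto (fun n => c n * Real.log (1 + (c n)⁻¹ * u x)) atTop (𝓝 (u x)) := by
        refine h1.congr fun n => ?_
        rw [div_eq_inv_mul]
      have h3 : Tendsto (fun n => p0 x * u x -
          p0 x * (c n * Real.log (1 + (c n)⁻¹ * u x))) atTop
          (𝓝 (p0 x * u x - p0 x * u x)) :=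
        tendsto_const_nhds.sub (h1'.const_mul (p0 x))
      rw [sub_self] at h3
      refine h3.congr fun n => ?_
      simp only [hg_def]; ring
    have hDCT : Tendsto (fun n => ∫ x, g n x) atTop (𝓝 0) := by
      have := tendsto_integral_of_dominated_convergence (g 0)
        (fun n => (hgint n).1) (hgint 0)
        (fun n => Eventually.of_forall fun x => by
          rw [Real.norm_eq_abs, abs_of_nonneg (hg0 n x)]; exact hgle n x)
        (Eventually.of_forall fun x => hgtend x)
      simpa using this
    have hfinal : (∫ x, p0 x * u x) ≤ 0 := ge_of_tendsto' hDCT hlow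
    have hconv : ∫ x, p0 x * (p k x / p 0 x) = (∫ x, p0 x * u x) + 1 := by
      have hid : (fun x => p0 x * (p k x / p 0 x)) = fun x => p0 x * u x + p0 x := by
        funext x; simp only [hu_def]; ring
      rw [hid, integral_add hu_int hp0Int, hp0int]
    linarith
  · -- first-order condition ⟹ minimality
    intro hcond r hnn hs
    obtain ⟨hI, hEq⟩ := hkey r hnn hs
    have hratio : ∀ x, p0 x * ((∑ j, r j * p j x) / p 0 x) =
        ∑ j, r j * (p0 x * (p j x / p 0 x)) := by
      intro x
      rw [Finset.sum_div, Finset.mul_sum]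
      exact Finset.sum_congr rfl fun j _ => by ring
    have hIq : Integrable (fun x => p0 x * ((∑ j, r j * p j x) / p 0 x)) := by
      rw [show (fun x => p0 x * ((∑ j, r j * p j x) / p 0 x)) =
        (fun x => ∑ j, r j * (p0 x * (p j x / p 0 x))) from funext hratio]
      exact integrable_finset_sum _ fun j _ => (hIntRatio j).const_mul (r j)
    have step1 : ∫ x, p0 x * Real.log ((∑ j, r j * p j x) / p 0 x) ≤
        ∫ x, (p0 x * ((∑ j, r j * p j x) / p 0 x) - p0 x) := by
      apply integral_mono hI (hIq.sub hp0Int)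
      intro x
      have hlog := Real.log_le_sub_one_of_pos
        (div_pos (hqpos r hnn hs x) (hppos 0 x))
      have hp := (hp0pos x).le
      have h2 := mul_le_mul_of_nonneg_left hlog hp
      simp only [Pi.sub_apply]
      nlinarith [h2]
    have step2 : ∫ x, (p0 x * ((∑ j, r j * p j x) / p 0 x) - p0 x) =
        (∑ j, r j * ∫ x, p0 x * (p j x / p 0 x)) - 1 := by
      rw [integral_sub hIq hp0Int, hp0int]
      congr 1
      rw [show (fun x => p0 x * ((∑ j, r j * p j x) / p 0 x)) =
        (fun x => ∑ j, r j * (p0 x * (p j x / p 0 x))) from funext hratio]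
      rw [integral_finset_sum _ fun j _ => (hIntRatio j).const_mul (r j)]
      exact Finset.sum_congr rfl fun j _ => integral_const_mul _ _
    have step3 : (∑ j, r j * ∫ x, p0 x * (p j x / p 0 x)) ≤ 1 := by
      have hterm : ∀ j ∈ Finset.univ, r j * ∫ x, p0 x * (p j x / p 0 x) ≤ r j := by
        intro j _
        by_cases hj : j = 0
        · subst hj
          have h1 : ∫ x, p0 x * (p 0 x / p 0 x) = 1 := by
            rw [show (fun x => p0 x * (p 0 x / p 0 x)) = p0 from funext fun x => by
              rw [div_self (hppos 0 x).ne', mul_one]]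
            exact hp0int
          rw [h1, mul_one]
        · calc r j * ∫ x, p0 x * (p j x / p 0 x) ≤ r j * 1 :=
              mul_le_mul_of_nonneg_left (hcond j hj) (hnn j)
            _ = r j := mul_one _
      calc (∑ j, r j * ∫ x, p0 x * (p j x / p 0 x)) ≤ ∑ j, r j :=
            Finset.sum_le_sum hterm
        _ = 1 := hs
    linarith
end

section
/- If a dominated PSD φ* exists in an uncertainty set U (satisfying the dominance condition against every φ ∈ U), then it is unique: if φ** ∈ U also satisfies the dominance condition against every element of U, then φ* = φ** almost everywhere on [−π, π]. -/
open MeasureTheory Real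

lemma aux_pos' (σ2 a b : ℝ) (hσ : 0 < σ2) (ha : 0 ≤ a) (hb : 0 ≤ b) :
    0 < 1 + a * (b - a) / (σ2 + a) ^ 2 := by
  have : 1 + a * (b - a) / (σ2 + a) ^ 2 = (σ2^2 + 2*σ2*a + a*b) / (σ2 + a)^2 := by
    have hden : (σ2 + a) ≠ 0 := by positivity
    field_simp; ring
  rw [this]; positivity

lemma aux_prod' (σ2 a b : ℝ) (hσ : 0 < σ2) (ha : 0 ≤ a) (hb : 0 ≤ b) :
    (1 + a * (b - a) / (σ2 + a) ^ 2) * (1 + b * (a - b) / (σ2 + b) ^ 2)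
      = 1 - σ2^2 * (a - b)^2 / ((σ2 + a)^2 * (σ2 + b)^2) := by
  have h1 : (σ2 + a) ≠ 0 := by positivity
  have h2 : (σ2 + b) ≠ 0 := by positivity
  field_simp; ring

lemma aux_bound' (σ2 a b C1 C2 : ℝ) (hσ : 0 < σ2) (ha : 0 ≤ a) (hb : 0 ≤ b)
    (haC : a ≤ C1) (hbC : b ≤ C2) :
    |Real.log (1 + a * (b - a) / (σ2 + a) ^ 2)|
      ≤ |Real.log (σ2^2 / (σ2 + C1)^2)| + |Real.log (1 + C1*C2 / σ2^2)| := by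
  have hC1 : 0 ≤ C1 := le_trans ha haC
  have hC2 : 0 ≤ C2 := le_trans hb hbC
  have hpos := aux_pos' σ2 a b hσ ha hb
  have hmpos : (0:ℝ) < σ2^2 / (σ2 + C1)^2 := by positivity
  have hm : σ2^2 / (σ2 + C1)^2 ≤ 1 + a * (b - a) / (σ2 + a) ^ 2 := by
    have hrw : 1 + a * (b - a) / (σ2 + a) ^ 2 = (σ2^2 + 2*σ2*a + a*b) / (σ2 + a)^2 := by
      have : (σ2 + a) ≠ 0 := by positivity
      field_simp; ring
    rw [hrw, div_le_div_iff₀ (by positivity) (by positivity)]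
    exact mul_le_mul (by nlinarith [mul_nonneg hσ.le ha, mul_nonneg ha hb])
      (by nlinarith) (sq_nonneg _) (by positivity)
  have hM : 1 + a * (b - a) / (σ2 + a) ^ 2 ≤ 1 + C1*C2 / σ2^2 := by
    have hnum : a * (b - a) ≤ C1 * C2 := by nlinarith
    have hden : σ2^2 ≤ (σ2 + a)^2 := by nlinarith
    have := div_le_div₀ (mul_nonneg hC1 hC2) hnum (by positivity : (0:ℝ) < σ2^2) hden
    linarith
  have l1 := Real.log_le_log hmpos hm
  have l2 := Real.log_le_log hpos hM
  rw [abs_le]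
  constructor
  · have := neg_abs_le (Real.log (σ2^2 / (σ2 + C1)^2))
    have := abs_nonneg (Real.log (1 + C1*C2 / σ2^2))
    linarith
  · have := le_abs_self (Real.log (1 + C1*C2 / σ2^2))
    have := abs_nonneg (Real.log (σ2^2 / (σ2 + C1)^2))
    linarith

/-- Uniqueness of the dominated PSD in an uncertainty set: if `φ*` and `φ**` both
satisfy the dominance condition against every element of `U`, they agree a.e. -/
theorem stmt_14 (σ2 : ℝ) (hσ : 0 < σ2)
    (U : Set (ℝ → ℝ))
    (hmeas : ∀ φ ∈ U, Measurable φ)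
    (hnn : ∀ φ ∈ U, ∀ ω, 0 ≤ φ ω)
    (hbd : ∀ φ ∈ U, ∃ C : ℝ, ∀ ω, φ ω ≤ C)
    (φstar : ℝ → ℝ) (hφstar : φstar ∈ U)
    (hdom : ∀ φ ∈ U, 0 ≤ (1 / (2 * π)) * ∫ ω in Set.Icc (-π) π,
        Real.log (1 + φstar ω * (φ ω - φstar ω) / (σ2 + φstar ω) ^ 2))
    (φstar2 : ℝ → ℝ) (hφstar2 : φstar2 ∈ U)
    (hdom2 : ∀ φ ∈ U, 0 ≤ (1 / (2 * π)) * ∫ ω in Set.Icc (-π) π,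
        Real.log (1 + φstar2 ω * (φ ω - φstar2 ω) / (σ2 + φstar2 ω) ^ 2)) :
    φstar =ᵐ[volume.restrict (Set.Icc (-π) π)] φstar2 := by
  set μ : Measure ℝ := volume.restrict (Set.Icc (-π) π) with hμ
  haveI : IsFiniteMeasure μ := by
    constructor
    rw [hμ, Measure.restrict_apply_univ]
    exact measure_Icc_lt_top
  have hπ : (0:ℝ) < 1 / (2 * π) := by positivity
  set g1 : ℝ → ℝ := fun ω =>
    Real.log (1 + φstar ω * (φstar2 ω - φstar ω) / (σ2 + φstar ω) ^ 2) with hg1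
  set g2 : ℝ → ℝ := fun ω =>
    Real.log (1 + φstar2 ω * (φstar ω - φstar2 ω) / (σ2 + φstar2 ω) ^ 2) with hg2
  have ha := hnn φstar hφstar
  have hb := hnn φstar2 hφstar2
  have hameas := hmeas φstar hφstar
  have hbmeas := hmeas φstar2 hφstar2
  obtain ⟨C1, hC1⟩ := hbd φstar hφstar
  obtain ⟨C2, hC2⟩ := hbd φstar2 hφstar2
  -- both integrals nonneg
  have hI1 : 0 ≤ ∫ ω, g1 ω ∂μ := by
    by_contra h
    push_neg at h
    have := mul_neg_of_pos_of_neg hπ h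
    have h2 := hdom φstar2 hφstar2
    rw [hμ] at this
    linarith
  have hI2 : 0 ≤ ∫ ω, g2 ω ∂μ := by
    by_contra h
    push_neg at h
    have := mul_neg_of_pos_of_neg hπ h
    have h2 := hdom2 φstar hφstar
    rw [hμ] at this
    linarith
  -- measurability
  have hg1m : Measurable g1 := by
    apply Measurable.log
    exact measurable_const.add (((hameas.mul (hbmeas.sub hameas))).div
      ((measurable_const.add hameas).pow_const 2))
  have hg2m : Measurable g2 := by
    apply Measurable.log
    exact measurable_const.add (((hbmeas.mul (hameas.sub hbmeas))).div
      ((measurable_const.add hbmeas).pow_const 2))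
  -- integrability
  have hg1i : Integrable g1 μ := by
    apply Integrable.mono' (integrable_const
      (|Real.log (σ2^2 / (σ2 + C1)^2)| + |Real.log (1 + C1*C2 / σ2^2)|))
      hg1m.aestronglyMeasurable
    refine ae_of_all _ fun ω => ?_
    rw [Real.norm_eq_abs]
    exact aux_bound' σ2 (φstar ω) (φstar2 ω) C1 C2 hσ (ha ω) (hb ω) (hC1 ω) (hC2 ω)
  have hg2i : Integrable g2 μ := by
    apply Integrable.mono' (integrable_const
      (|Real.log (σ2^2 / (σ2 + C2)^2)| + |Real.log (1 + C2*C1 / σ2^2)|))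
      hg2m.aestronglyMeasurable
    refine ae_of_all _ fun ω => ?_
    rw [Real.norm_eq_abs]
    exact aux_bound' σ2 (φstar2 ω) (φstar ω) C2 C1 hσ (hb ω) (ha ω) (hC2 ω) (hC1 ω)
  -- pointwise nonpositivity of the sum
  have hsum_le : ∀ ω, g1 ω + g2 ω ≤ 0 := by
    intro ω
    have hp1 := aux_pos' σ2 (φstar ω) (φstar2 ω) hσ (ha ω) (hb ω)
    have hp2 := aux_pos' σ2 (φstar2 ω) (φstar ω) hσ (hb ω) (ha ω)
    have hmul : g1 ω + g2 ω = Real.log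
        ((1 + φstar ω * (φstar2 ω - φstar ω) / (σ2 + φstar ω) ^ 2) *
         (1 + φstar2 ω * (φstar ω - φstar2 ω) / (σ2 + φstar2 ω) ^ 2)) :=
      (Real.log_mul hp1.ne' hp2.ne').symm
    rw [hmul]
    apply Real.log_nonpos
    · positivity
    · rw [aux_prod' σ2 (φstar ω) (φstar2 ω) hσ (ha ω) (hb ω)]
      have : 0 ≤ σ2^2 * (φstar ω - φstar2 ω)^2 /
          ((σ2 + φstar ω)^2 * (σ2 + φstar2 ω)^2) := by positivity
      linarith
  -- the integral of the sum is zero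
  have hint_add : ∫ ω, (g1 ω + g2 ω) ∂μ = (∫ ω, g1 ω ∂μ) + ∫ ω, g2 ω ∂μ :=
    integral_add hg1i hg2i
  have hle0 : ∫ ω, (g1 ω + g2 ω) ∂μ ≤ 0 :=
    integral_nonpos (fun ω => hsum_le ω)
  have hzero : ∫ ω, (g1 ω + g2 ω) ∂μ = 0 := le_antisymm hle0 (by rw [hint_add]; linarith)
  -- hence the sum is zero a.e.
  have hneg0 : ∫ ω, -(g1 ω + g2 ω) ∂μ = 0 := by
    rw [integral_neg, hzero, neg_zero]
  have hae : (fun ω => -(g1 ω + g2 ω)) =ᵐ[μ] 0 :=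
    (integral_eq_zero_iff_of_nonneg (fun ω => neg_nonneg.mpr (hsum_le ω))
      ((hg1i.add hg2i).neg)).mp hneg0
  refine hae.mono fun ω hω => ?_
  simp only [Pi.zero_apply, neg_eq_zero] at hω
  -- pointwise: sum of logs zero forces equality
  have hp1 := aux_pos' σ2 (φstar ω) (φstar2 ω) hσ (ha ω) (hb ω)
  have hp2 := aux_pos' σ2 (φstar2 ω) (φstar ω) hσ (hb ω) (ha ω)
  have hmul : g1 ω + g2 ω = Real.log
      ((1 + φstar ω * (φstar2 ω - φstar ω) / (σ2 + φstar ω) ^ 2) *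
       (1 + φstar2 ω * (φstar ω - φstar2 ω) / (σ2 + φstar2 ω) ^ 2)) :=
    (Real.log_mul hp1.ne' hp2.ne').symm
  rw [hmul] at hω
  have hPpos : 0 < (1 + φstar ω * (φstar2 ω - φstar ω) / (σ2 + φstar ω) ^ 2) *
      (1 + φstar2 ω * (φstar ω - φstar2 ω) / (σ2 + φstar2 ω) ^ 2) := mul_pos hp1 hp2
  have hP1 : (1 + φstar ω * (φstar2 ω - φstar ω) / (σ2 + φstar ω) ^ 2) *
      (1 + φstar2 ω * (φstar ω - φstar2 ω) / (σ2 + φstar2 ω) ^ 2) = 1 := by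
    rcases (Real.log_eq_zero).mp hω with h | h | h
    · exact absurd h hPpos.ne'
    · exact h
    · exact absurd h (by linarith)
  rw [aux_prod' σ2 (φstar ω) (φstar2 ω) hσ (ha ω) (hb ω)] at hP1
  have hden : ((σ2 + φstar ω)^2 * (σ2 + φstar2 ω)^2) ≠ 0 := by
    have h1 : 0 < σ2 + φstar ω := by linarith [ha ω]
    have h2 : 0 < σ2 + φstar2 ω := by linarith [hb ω]
    exact (mul_pos (pow_pos h1 2) (pow_pos h2 2)).ne'
  have : σ2^2 * (φstar ω - φstar2 ω)^2 = 0 := by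
    have h0 : σ2^2 * (φstar ω - φstar2 ω)^2 /
        ((σ2 + φstar ω)^2 * (σ2 + φstar2 ω)^2) = 0 := by linarith
    rcases div_eq_zero_iff.mp h0 with h | h
    · exact h
    · exact absurd h hden
  have : (φstar ω - φstar2 ω)^2 = 0 := by
    rcases mul_eq_zero.mp this with h | h
    · exact absurd h (by positivity)
    · exact h
  have := sub_eq_zero.mp (pow_eq_zero_iff two_ne_zero |>.mp this)
  linarith
end

section
/- Let A and B be positive definite N×N real matrices such that I + σ²(B⁻¹ − A⁻¹) is positive definite and det(B⁻¹A) ≤ det(I + σ²(B⁻¹ − A⁻¹)). Then for Y ~ N(0, σ²I), E[ p_B(Y)/p_A(Y) ] ≤ 1, where p_A and p_B denote the zero-mean Gaussian densities with covariances A and B respectively. -/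
open MeasureTheory Matrix

lemma gauss_scalar_int (N : ℕ) :
    (∫ x : Fin N → ℝ, Real.exp (-(1/2) * (x ⬝ᵥ x))) = (2 * Real.pi) ^ ((N : ℝ) / 2) := by
  have h1 : ∀ x : Fin N → ℝ, Real.exp (-(1/2) * (x ⬝ᵥ x))
      = ∏ i, Real.exp (-(1/2) * (x i) ^ 2) := by
    intro x
    rw [← Real.exp_sum, dotProduct, Finset.mul_sum]
    congr 1
    refine Finset.sum_congr rfl fun i _ => ?_
    ring
  simp_rw [h1]
  rw [volume_pi, integral_fintype_prod_eq_pow (ι := Fin N) (fun t : ℝ => Real.exp (-(1/2) * t ^ 2))]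
  have h2 : (∫ t : ℝ, Real.exp (-(1/2) * t ^ 2)) = Real.sqrt (2 * Real.pi) := by
    have := integral_gaussian (1/2)
    simp only [neg_mul] at this ⊢
    rw [this]
    congr 1
    rw [div_div_eq_mul_div, div_one, mul_comm]
  rw [Fintype.card_fin, h2, ← Real.rpow_natCast (Real.sqrt (2 * Real.pi)) N,
    Real.rpow_natCast, ← Real.rpow_natCast (√(2 * Real.pi)) N,
    Real.sqrt_eq_rpow, ← Real.rpow_mul (by positivity)]
  congr 1
  ring

lemma gauss_int {N : ℕ} (M : Matrix (Fin N) (Fin N) ℝ) (hM : M.PosDef) :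
    (∫ y : Fin N → ℝ, Real.exp (-(1/2) * (y ⬝ᵥ M.mulVec y)))
      = (2 * Real.pi) ^ ((N : ℝ) / 2) * M.det ^ (-(1 : ℝ) / 2) := by
  have hMu : IsUnit M.det := hM.det_pos.ne'.isUnit
  have hMi : (M⁻¹).PosDef := hM.inv
  set R := (open scoped MatrixOrder in CFC.sqrt (M⁻¹)) with hRdef
  have hRR : R * R = M⁻¹ := (open scoped MatrixOrder in CFC.sqrt_mul_sqrt_self (M⁻¹) hMi.posSemidef.nonneg)
  have hRsd : R.PosSemidef := (open scoped MatrixOrder in (CFC.sqrt_nonneg (M⁻¹)).posSemidef)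
  have hdetR : R.det ^ 2 = M.det⁻¹ := by
    rw [sq, ← Matrix.det_mul, hRR, Matrix.det_nonsing_inv, Ring.inverse_eq_inv']
  have hdetRnn : 0 ≤ R.det := by
    rw [hRsd.1.det_eq_prod_eigenvalues]
    exact Finset.prod_nonneg fun i _ => by simpa using hRsd.eigenvalues_nonneg i
  have hdetRpos : 0 < R.det := by
    have h2 : 0 < R.det ^ 2 := by rw [hdetR]; exact inv_pos.mpr hM.det_pos
    rcases hdetRnn.lt_or_eq with h | h
    · exact h
    · rw [← h] at h2; simp at h2
  have hRu : IsUnit R.det := hdetRpos.ne'.isUnit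
  -- key conjugation identity
  have key : R * M * R = 1 := by
    have hM' : M = (R * R)⁻¹ := by
      rw [hRR, Matrix.nonsing_inv_nonsing_inv _ hMu]
    rw [hM', Matrix.mul_inv_rev, ← Matrix.mul_assoc, Matrix.mul_assoc (R * R⁻¹),
      Matrix.mul_nonsing_inv _ hRu, Matrix.nonsing_inv_mul _ hRu, Matrix.one_mul]
  have hquad : ∀ x : Fin N → ℝ,
      (R.mulVec x) ⬝ᵥ M.mulVec (R.mulVec x) = x ⬝ᵥ x := by
    intro x
    have hsymm : Rᵀ = R := by
      have := hRsd.1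
      rwa [Matrix.IsHermitian, Matrix.conjTranspose_eq_transpose_of_trivial] at this
    rw [Matrix.mulVec_mulVec, Matrix.dotProduct_mulVec, ← Matrix.vecMul_transpose,
      Matrix.vecMul_vecMul, hsymm, ← Matrix.mul_assoc, key, Matrix.vecMul_one]
  set g : (Fin N → ℝ) → ℝ := fun y => Real.exp (-(1/2) * (y ⬝ᵥ M.mulVec y)) with hg
  have hcont : Continuous g := by
    apply Real.continuous_exp.comp
    apply Continuous.mul continuous_const
    simp only [dotProduct, Matrix.mulVec]
    fun_prop
  have hdf : LinearMap.det (Matrix.toLin' R) = R.det := LinearMap.det_toLin' R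
  have hmap : Measure.map (⇑(Matrix.toLin' R)) (volume : Measure (Fin N → ℝ))
      = ENNReal.ofReal |(R.det)⁻¹| • volume := by
    rw [← hdf]
    exact Measure.map_linearMap_addHaar_eq_smul_addHaar volume
      (by rw [hdf]; exact hdetRpos.ne')
  have hml : Measurable (⇑(Matrix.toLin' R)) :=
    (LinearMap.continuous_of_finiteDimensional _).measurable
  have h1 : (∫ y, g y ∂(Measure.map (⇑(Matrix.toLin' R)) volume))
      = ∫ x, g ((Matrix.toLin' R) x) :=
    integral_map hml.aemeasurable hcont.aestronglyMeasurable
  have h2 : (∫ x, g ((Matrix.toLin' R) x)) = (2 * Real.pi) ^ ((N : ℝ) / 2) := by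
    have : ∀ x : Fin N → ℝ, g ((Matrix.toLin' R) x) = Real.exp (-(1/2) * (x ⬝ᵥ x)) := by
      intro x
      rw [hg]
      simp only [Matrix.toLin'_apply]
      rw [hquad x]
    simp_rw [this]
    exact gauss_scalar_int N
  have h3 : (∫ y, g y ∂(Measure.map (⇑(Matrix.toLin' R)) volume))
      = |R.det⁻¹| * ∫ y, g y := by
    rw [hmap, integral_smul_measure, ENNReal.toReal_ofReal (abs_nonneg _), smul_eq_mul]
  have h4 : |R.det⁻¹| * (∫ y, g y) = (2 * Real.pi) ^ ((N : ℝ) / 2) := by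
    rw [← h3, h1, h2]
  have h5 : (∫ y, g y) = R.det * (2 * Real.pi) ^ ((N : ℝ) / 2) := by
    rw [abs_of_pos (inv_pos.mpr hdetRpos)] at h4
    field_simp at h4
    linarith [h4]
  have h6 : R.det = M.det ^ (-(1 : ℝ) / 2) := by
    have : R.det = Real.sqrt (M.det⁻¹) := by
      rw [← hdetR, Real.sqrt_sq hdetRnn]
    rw [this, Real.sqrt_eq_rpow, ← Real.rpow_neg_one M.det,
      ← Real.rpow_mul hM.det_pos.le]
    norm_num
  rw [h5, h6]
  ring

/-- Zero-mean multivariate Gaussian density with covariance matrix `S`. -/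
noncomputable def gaussDensity {N : ℕ} (S : Matrix (Fin N) (Fin N) ℝ)
    (y : Fin N → ℝ) : ℝ :=
  (2 * Real.pi) ^ (-(N : ℝ) / 2) * S.det ^ (-(1 : ℝ) / 2) *
    Real.exp (-(1 / 2) * (y ⬝ᵥ S⁻¹.mulVec y))

/-- 'If' direction of the Gaussian dominance characterization:
positive definiteness of `I + σ²(B⁻¹ − A⁻¹)` together with the determinant
inequality implies `E_{N(0,σ²I)}[p_B/p_A] ≤ 1`. -/
theorem stmt_15 {N : ℕ} (σ2 : ℝ) (hσ : 0 < σ2)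
    (A B : Matrix (Fin N) (Fin N) ℝ) (hA : A.PosDef) (hB : B.PosDef)
    (hpd : (1 + σ2 • (B⁻¹ - A⁻¹)).PosDef)
    (hdet : (B⁻¹ * A).det ≤ (1 + σ2 • (B⁻¹ - A⁻¹)).det) :
    (∫ y : Fin N → ℝ,
        gaussDensity B y / gaussDensity A y *
          gaussDensity (σ2 • (1 : Matrix (Fin N) (Fin N) ℝ)) y) ≤ 1 := by
  set K := 1 + σ2 • (B⁻¹ - A⁻¹) with hK
  set M := B⁻¹ - A⁻¹ + σ2⁻¹ • (1 : Matrix (Fin N) (Fin N) ℝ) with hM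
  have hMK : M = σ2⁻¹ • K := by
    rw [hM, hK, smul_add, smul_smul, inv_mul_cancel₀ hσ.ne', one_smul]
    abel
  have hMpd : M.PosDef := by
    rw [hMK]
    refine Matrix.PosDef.of_dotProduct_mulVec_pos ?_ ?_
    · have h1 := hpd.1
      rw [Matrix.IsHermitian] at h1 ⊢
      rw [Matrix.conjTranspose_smul, h1]
      congr 1
    · intro x hx
      have h2 := hpd.dotProduct_mulVec_pos hx
      rw [Matrix.smul_mulVec, dotProduct_smul, smul_eq_mul]
      exact mul_pos (inv_pos.mpr hσ) h2
  have hKdetpos : 0 < K.det := hpd.det_pos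
  have hdetM : M.det = (σ2⁻¹) ^ N * K.det := by
    rw [hMK, Matrix.det_smul, Fintype.card_fin]
  have hinv : (σ2 • (1 : Matrix (Fin N) (Fin N) ℝ))⁻¹ = σ2⁻¹ • 1 := by
    apply Matrix.inv_eq_right_inv
    rw [Matrix.smul_mul, Matrix.mul_smul, smul_smul, Matrix.one_mul,
      mul_inv_cancel₀ hσ.ne', one_smul]
  have hdetS : (σ2 • (1 : Matrix (Fin N) (Fin N) ℝ)).det = σ2 ^ N := by
    rw [Matrix.det_smul, Fintype.card_fin, Matrix.det_one, mul_one]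
  set C : ℝ := B.det ^ (-(1:ℝ)/2) * A.det ^ ((1:ℝ)/2) * (2*Real.pi) ^ (-(N:ℝ)/2)
      * (σ2 ^ N) ^ (-(1:ℝ)/2) with hC
  have hpt : ∀ y : Fin N → ℝ, gaussDensity B y / gaussDensity A y *
      gaussDensity (σ2 • (1 : Matrix (Fin N) (Fin N) ℝ)) y
      = C * Real.exp (-(1/2) * (y ⬝ᵥ M.mulVec y)) := by
    intro y
    unfold gaussDensity
    rw [hinv, hdetS]
    have hexp : Real.exp (-(1/2) * (y ⬝ᵥ B⁻¹.mulVec y)) /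
        Real.exp (-(1/2) * (y ⬝ᵥ A⁻¹.mulVec y)) *
        Real.exp (-(1/2) * (y ⬝ᵥ (σ2⁻¹ • (1:Matrix (Fin N) (Fin N) ℝ)).mulVec y))
        = Real.exp (-(1/2) * (y ⬝ᵥ M.mulVec y)) := by
      rw [← Real.exp_sub, ← Real.exp_add]
      congr 1
      rw [hM, Matrix.add_mulVec, Matrix.sub_mulVec, dotProduct_add,
        dotProduct_sub]
      ring
    have hcpos : (0:ℝ) < (2*Real.pi) ^ (-(N:ℝ)/2) := Real.rpow_pos_of_pos (by positivity) _
    have hapos : (0:ℝ) < A.det ^ (-(1:ℝ)/2) := Real.rpow_pos_of_pos hA.det_pos _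
    have hepos : (0:ℝ) < Real.exp (-(1/2) * (y ⬝ᵥ A⁻¹.mulVec y)) := Real.exp_pos _
    have hainv : (A.det ^ (-(1:ℝ)/2))⁻¹ = A.det ^ ((1:ℝ)/2) := by
      rw [← Real.rpow_neg hA.det_pos.le]
      norm_num
    rw [hC, ← hexp]
    field_simp
    rw [← hainv]
    field_simp
  simp_rw [hpt]
  rw [MeasureTheory.integral_const_mul, gauss_int M hMpd, hdetM]
  -- numeric simplification
  have hppos : (0:ℝ) < 2 * Real.pi := by positivity
  have h2pi : (2*Real.pi) ^ (-(N:ℝ)/2) * (2*Real.pi) ^ ((N:ℝ)/2) = 1 := by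
    rw [← Real.rpow_add hppos, neg_div, neg_add_cancel, Real.rpow_zero]
  have hs1 : (σ2 ^ N) ^ (-(1:ℝ)/2) * ((σ2⁻¹) ^ N * K.det) ^ (-(1:ℝ)/2)
      = K.det ^ (-(1:ℝ)/2) := by
    rw [← Real.mul_rpow (by positivity) (by positivity), ← mul_assoc, ← mul_pow,
      mul_inv_cancel₀ hσ.ne', one_pow, one_mul]
  have hfin : C * ((2*Real.pi) ^ ((N:ℝ)/2) * ((σ2⁻¹) ^ N * K.det) ^ (-(1:ℝ)/2))
      = A.det ^ ((1:ℝ)/2) * B.det ^ (-(1:ℝ)/2) * K.det ^ (-(1:ℝ)/2) := by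
    rw [hC]
    calc B.det ^ (-(1:ℝ)/2) * A.det ^ ((1:ℝ)/2) * (2*Real.pi) ^ (-(N:ℝ)/2)
          * (σ2 ^ N) ^ (-(1:ℝ)/2)
          * ((2*Real.pi) ^ ((N:ℝ)/2) * ((σ2⁻¹) ^ N * K.det) ^ (-(1:ℝ)/2))
        = (A.det ^ ((1:ℝ)/2) * B.det ^ (-(1:ℝ)/2))
          * ((2*Real.pi) ^ (-(N:ℝ)/2) * (2*Real.pi) ^ ((N:ℝ)/2))
          * ((σ2 ^ N) ^ (-(1:ℝ)/2) * ((σ2⁻¹) ^ N * K.det) ^ (-(1:ℝ)/2)) := by ring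
      _ = _ := by rw [h2pi, hs1]; ring
  rw [hfin]
  -- final inequality
  have hba : A.det * B.det⁻¹ ≤ K.det := by
    rwa [Matrix.det_mul, Matrix.det_nonsing_inv, Ring.inverse_eq_inv', mul_comm] at hdet
  have hbneg : B.det ^ (-(1:ℝ)/2) = (B.det⁻¹) ^ ((1:ℝ)/2) := by
    rw [← Real.rpow_neg_one B.det, ← Real.rpow_mul hB.det_pos.le]
    norm_num
  have hkneg : K.det ^ (-(1:ℝ)/2) = (K.det⁻¹) ^ ((1:ℝ)/2) := by
    rw [← Real.rpow_neg_one K.det, ← Real.rpow_mul hKdetpos.le]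
    norm_num
  have hbinn : (0:ℝ) ≤ B.det⁻¹ := inv_nonneg.mpr hB.det_pos.le
  have hkinn : (0:ℝ) ≤ K.det⁻¹ := inv_nonneg.mpr hKdetpos.le
  rw [hbneg, hkneg, ← Real.mul_rpow hA.det_pos.le hbinn,
    ← Real.mul_rpow (mul_nonneg hA.det_pos.le hbinn) hkinn]
  apply Real.rpow_le_one (mul_nonneg (mul_nonneg hA.det_pos.le hbinn) hkinn)
  · calc A.det * B.det⁻¹ * K.det⁻¹ ≤ K.det * K.det⁻¹ :=
        mul_le_mul_of_nonneg_right hba hkinn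
      _ = 1 := mul_inv_cancel₀ hKdetpos.ne'
  · norm_num
end
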